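/- Let F be a fusion system on a finite p-group S, and let α₁, …, α_n ∈ Aut_F(S) be a complete set of representatives of the cosets of Inn(S) in Aut_F(S) (i.e., of Out_F(S)). Set Y₀ equal to the disjoint union of the S-S-bisets S×_{(S,α_i)}S for i = 1, …, n. Then for every φ ∈ Aut_F(S), the S-S-bisets _φ Y₀ (left S-action twisted by φ, i.e., s·y = φ(s)y) and Y₀ are isomorphic; in particular Y₀ is left F-stable at S. -/

import Mathlib

/-- The conjugation homomorphism `c_s : P → Q`, `u ↦ s u s⁻¹`,
for subgroups `P, Q` of `S` with `s P s⁻¹ ≤ Q`. -/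
def conjHom {S : Type} [Group S] (P Q : Subgroup S) (s : S)
    (h : ∀ p ∈ P, s * p * s⁻¹ ∈ Q) : ↥P →* ↥Q where
  toFun p := ⟨s * (p : S) * s⁻¹, h p p.2⟩
  map_one' := by ext; simp
  map_mul' a b := by ext; push_cast; group

/-- A fusion system on a group `S`: for each pair of subgroups `P, Q` of `S` a set
of injective group homomorphisms `P → Q`, containing all conjugation maps induced by
elements of `S`, closed under composition, and such that every morphism, corestricted
to an isomorphism onto its image, lies in the system together with its inverse. -/
structure FusionSystem (S : Type) [Group S] where
  Hom : ∀ P Q : Subgroup S, Set (↥P →* ↥Q)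
  inj : ∀ {P Q : Subgroup S} {φ : ↥P →* ↥Q}, φ ∈ Hom P Q → Function.Injective φ
  conj_mem : ∀ (P Q : Subgroup S) (s : S) (h : ∀ p ∈ P, s * p * s⁻¹ ∈ Q),
    conjHom P Q s h ∈ Hom P Q
  comp_mem : ∀ {P Q R : Subgroup S} {φ : ↥P →* ↥Q} {ψ : ↥Q →* ↥R},
    φ ∈ Hom P Q → ψ ∈ Hom Q R → ψ.comp φ ∈ Hom P R
  restrict_mem : ∀ {P Q : Subgroup S} {φ : ↥P →* ↥Q}, φ ∈ Hom P Q →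
    ∃ ψ ∈ Hom P (Subgroup.map Q.subtype φ.range),
      ∃ χ ∈ Hom (Subgroup.map Q.subtype φ.range) P,
        (∀ u : ↥P, ((ψ u : S)) = ((φ u : ↥Q) : S)) ∧
        (∀ u, χ (ψ u) = u) ∧ (∀ v, ψ (χ v) = v)

/-- Two subgroups are `F`-conjugate if there is an isomorphism between them in `F`. -/
def FConj {S : Type} [Group S] (F : FusionSystem S) (P P' : Subgroup S) : Prop :=
  ∃ φ ∈ F.Hom P P', Function.Bijective φ

/-- An `S`-`S`-biset: a set with commuting left and right `S`-actions. -/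
structure Biset (S : Type) [Group S] where
  X : Type
  l : S → X → X
  r : X → S → X
  l_one : ∀ x, l 1 x = x
  l_mul : ∀ s t x, l (s * t) x = l s (l t x)
  r_one : ∀ x, r x 1 = x
  r_mul : ∀ x s t, r x (s * t) = r (r x s) t
  lr_comm : ∀ s x t, l s (r x t) = r (l s x) t

/-- The relation on `S × S` generated by `(xq, y) ∼ (x, φ(q)y)` for `q ∈ Q`. -/
def amalgRel {S : Type} [Group S] (Q : Subgroup S) (φ : ↥Q →* S) :
    S × S → S × S → Prop :=
  fun a b => ∃ q : Q, a.1 = b.1 * q ∧ b.2 = φ q * a.2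

/-- The `S`-`S`-biset `S ×_{(Q,φ)} S`. -/
def amalgBiset {S : Type} [Group S] (Q : Subgroup S) (φ : ↥Q →* S) : Biset S where
  X := Quot (amalgRel Q φ)
  l s := Quot.map (fun a => (s * a.1, a.2))
    (by rintro a b ⟨q, h1, h2⟩; exact ⟨q, by simp only []; rw [h1, mul_assoc], h2⟩)
  r x t := Quot.map (fun a => (a.1, a.2 * t))
    (by rintro a b ⟨q, h1, h2⟩; exact ⟨q, h1, by simp only []; rw [h2, mul_assoc]⟩) x
  l_one := by rintro ⟨a⟩; simp [Quot.map]
  l_mul := by rintro s t ⟨a⟩; simp [Quot.map, mul_assoc]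
  r_one := by rintro ⟨a⟩; simp [Quot.map]
  r_mul := by rintro ⟨a⟩ s t; simp [Quot.map, mul_assoc]
  lr_comm := by rintro s ⟨a⟩ t; simp [Quot.map]

/-- An injective map of `S`-`S`-bisets from `A` into `B` (a copy of `A` as a subbiset of `B`). -/
def ContainsCopy {S : Type} [Group S] (A B : Biset S) : Prop :=
  ∃ e : A.X → B.X, Function.Injective e ∧
    (∀ s z, e (A.l s z) = B.l s (e z)) ∧ (∀ z t, e (A.r z t) = B.r (e z) t)

/-- An isomorphism of `S`-`S`-bisets from `A` onto the subset `O` of `B`. -/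
def CopyOnto {S : Type} [Group S] (A B : Biset S) (O : Set B.X) : Prop :=
  ∃ e : A.X → B.X, Function.Injective e ∧ Set.range e = O ∧
    (∀ s z, e (A.l s z) = B.l s (e z)) ∧ (∀ z t, e (A.r z t) = B.r (e z) t)

/-- `X` is `F`-generated: every transitive subbiset (i.e. every `S`-`S`-orbit) of `X`
is isomorphic to `S ×_{(Q,φ)} S` for some `Q ≤ S` and `φ ∈ Hom_F(Q, S)`. -/
def FGenerated {S : Type} [Group S] (F : FusionSystem S) (B : Biset S) : Prop :=
  ∀ x : B.X, ∃ (Q : Subgroup S) (φ : ↥Q →* ↥(⊤ : Subgroup S)), φ ∈ F.Hom Q ⊤ ∧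
    CopyOnto (amalgBiset Q ((Subgroup.subtype ⊤).comp φ)) B
      {y | ∃ s t : S, y = B.l s (B.r x t)}

/-- `X` is left `F`-stable: for every `Q ≤ S` and `φ ∈ Hom_F(Q, S)`, the `Q`-`S`-bisets
`_Q X` and `_φ X` are isomorphic. -/
def LeftFStable {S : Type} [Group S] (F : FusionSystem S) (B : Biset S) : Prop :=
  ∀ (Q : Subgroup S) (φ : ↥Q →* ↥(⊤ : Subgroup S)), φ ∈ F.Hom Q ⊤ →
    ∃ e : B.X ≃ B.X,
      (∀ (q : ↥Q) (x : B.X), e (B.l (q : S) x) = B.l ((φ q : ↥(⊤ : Subgroup S)) : S) (e x)) ∧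
      (∀ (x : B.X) (s : S), e (B.r x s) = B.r (e x) s)

/-- A left semicharacteristic biset for `F`: a finite `S`-`S`-biset which is
`F`-generated and left `F`-stable. -/
def IsLeftSemicharacteristic {S : Type} [Group S] (F : FusionSystem S) (B : Biset S) : Prop :=
  Finite B.X ∧ FGenerated F B ∧ LeftFStable F B

/-- The group of automorphisms of `X` as a right `S`-set: all bijections `f : X → X`
with `f (x s) = f x · s`. -/
def rEquivGroup {S : Type} [Group S] (B : Biset S) : Subgroup (Equiv.Perm B.X) where
  carrier := {f | ∀ x s, f (B.r x s) = B.r (f x) s}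
  one_mem' := fun _ _ => rfl
  mul_mem' := by
    intro f g hf hg x s
    simp only [Equiv.Perm.mul_apply, hg x s, hf (g x) s]
  inv_mem' := by
    intro f hf x s
    apply f.injective
    rw [hf, Equiv.Perm.inv_def, Equiv.apply_symm_apply, Equiv.apply_symm_apply]

/-- The virtual fixed-point count `|X^P|` of a virtual `S`-set given by the formal
sum `Σ_H (c H) · S/H`. -/
noncomputable def fixedCount {S : Type} [Group S] (c : Subgroup S → ℚ) (P : Subgroup S) : ℚ :=
  ∑ᶠ H : Subgroup S, c H * (Nat.card {x : S ⧸ H // ∀ p ∈ P, p • x = x} : ℚ)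

/-- Subgroups `P, Q` of `S` are `S`-conjugate. -/
def SConj {S : Type} [Group S] (P Q : Subgroup S) : Prop :=
  ∃ g : S, Q = Subgroup.map (MulAut.conj g).toMonoidHom P

/-- An isomorphism of `S`-`S`-bisets. -/
def BisetIso {S : Type} [Group S] (A B : Biset S) : Prop :=
  ∃ e : A.X ≃ B.X,
    (∀ s z, e (A.l s z) = B.l s (e z)) ∧ (∀ z t, e (A.r z t) = B.r (e z) t)

/-- Disjoint union of a family of `S`-`S`-bisets. -/
def sigmaBiset {S : Type} [Group S] {ι : Type} (B : ι → Biset S) : Biset S where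
  X := Σ i : ι, (B i).X
  l s x := ⟨x.1, (B x.1).l s x.2⟩
  r x t := ⟨x.1, (B x.1).r x.2 t⟩
  l_one := by rintro ⟨i, x⟩; simp [(B i).l_one]
  l_mul := by rintro s t ⟨i, x⟩; simp [(B i).l_mul]
  r_one := by rintro ⟨i, x⟩; simp [(B i).r_one]
  r_mul := by rintro ⟨i, x⟩ s t; simp [(B i).r_mul]
  lr_comm := by rintro s ⟨i, x⟩ t; simp [(B i).lr_comm]

/-- The biset `S ×_{(S,α)} S` for an endomorphism `α` of `S` (with `Q = S`). -/
def fullAmalg (S : Type) [Group S] (α : S →* S) : Biset S :=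
  amalgBiset ⊤ (α.comp (Subgroup.subtype ⊤))

/-- `Y₀ = ∐ᵢ S ×_{(S,αᵢ)} S` for a family of morphisms `αᵢ ∈ Hom_F(S,S)`. -/
def diagUnion (S : Type) [Group S] {n : ℕ}
    (α : Fin n → (↥(⊤ : Subgroup S) →* ↥(⊤ : Subgroup S))) : Biset S :=
  sigmaBiset (fun i => amalgBiset ⊤ ((Subgroup.subtype ⊤).comp (α i)))

section Aux
variable {S : Type} [Group S]

/-- The biset `S ×_{(⊤,γ)} S` is in bijection with `S` via `[x,y] ↦ γ(x) y`. -/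
def amalgToS (γ : ↥(⊤ : Subgroup S) →* S) : (amalgBiset ⊤ γ).X ≃ S where
  toFun := Quot.lift (fun a => γ ⟨a.1, Subgroup.mem_top _⟩ * a.2) (by
    rintro a b ⟨q, h1, h2⟩
    rw [h1, h2]
    have : (⟨b.1 * (q : S), Subgroup.mem_top _⟩ : ↥(⊤ : Subgroup S))
        = ⟨b.1, Subgroup.mem_top _⟩ * q := rfl
    rw [this, map_mul, mul_assoc])
  invFun z := Quot.mk _ (1, z)
  left_inv := by
    rintro ⟨a⟩
    exact (Quot.sound ⟨⟨a.1, Subgroup.mem_top _⟩, (one_mul _).symm, rfl⟩).symm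
  right_inv z := by
    have : (⟨(1 : S), Subgroup.mem_top _⟩ : ↥(⊤ : Subgroup S)) = 1 := rfl
    simp [Quot.lift, this]

theorem amalgToS_l (γ : ↥(⊤ : Subgroup S) →* S) (s : S) (z : (amalgBiset ⊤ γ).X) :
    amalgToS γ ((amalgBiset ⊤ γ).l s z) = γ ⟨s, Subgroup.mem_top _⟩ * amalgToS γ z := by
  obtain ⟨a⟩ := z
  show γ ⟨s * a.1, _⟩ * a.2 = _
  have : (⟨s * a.1, Subgroup.mem_top _⟩ : ↥(⊤ : Subgroup S))
      = ⟨s, Subgroup.mem_top _⟩ * ⟨a.1, Subgroup.mem_top _⟩ := rfl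
  rw [this, map_mul, mul_assoc]
  rfl

theorem amalgToS_r (γ : ↥(⊤ : Subgroup S) →* S) (z : (amalgBiset ⊤ γ).X) (t : S) :
    amalgToS γ ((amalgBiset ⊤ γ).r z t) = amalgToS γ z * t := by
  obtain ⟨a⟩ := z
  show γ ⟨a.1, _⟩ * (a.2 * t) = _
  rw [← mul_assoc]
  rfl

end Aux

/-- For representatives `α₁, …, α_n` of `Out_F(S) = Aut_F(S)/Inn(S)`, the biset
`Y₀ = ∐ᵢ S ×_{(S,αᵢ)} S` satisfies `_φ Y₀ ≅ Y₀` for every `φ ∈ Aut_F(S)`;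
in particular `Y₀` is left `F`-stable at `S`. -/
theorem diagUnion_left_stable_at_top
    (p : ℕ) [Fact p.Prime] (S : Type) [Group S] [Fintype S] (hS : IsPGroup p S)
    (F : FusionSystem S) (n : ℕ)
    (α : Fin n → (↥(⊤ : Subgroup S) →* ↥(⊤ : Subgroup S)))
    (hα : ∀ i, α i ∈ F.Hom ⊤ ⊤) (hαbij : ∀ i, Function.Bijective (α i))
    (hrep : ∀ φ ∈ F.Hom (⊤ : Subgroup S) ⊤, Function.Bijective φ →
      ∃! i : Fin n, ∃ s : S, ∀ x : ↥(⊤ : Subgroup S),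
        ((φ x : ↥(⊤ : Subgroup S)) : S) = s * ((α i x : ↥(⊤ : Subgroup S)) : S) * s⁻¹) :
    ∀ φ ∈ F.Hom (⊤ : Subgroup S) ⊤, Function.Bijective φ →
      ∃ e : (diagUnion S α).X ≃ (diagUnion S α).X,
        (∀ (s : S) (y : (diagUnion S α).X),
          e ((diagUnion S α).l ((φ ⟨s, Subgroup.mem_top s⟩ : ↥(⊤ : Subgroup S)) : S) y) =
            (diagUnion S α).l s (e y)) ∧
        (∀ (y : (diagUnion S α).X) (t : S),
          e ((diagUnion S α).r y t) = (diagUnion S α).r (e y) t)  := by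
  intro φ hφ hφbij
  classical
  -- For each `i`, the automorphism `αᵢ ∘ φ` lies in `Aut_F(S)`, so it is `c_s ∘ α_{j i}`
  -- for a unique index `j i` and some `s i ∈ S`.
  have key : ∀ i : Fin n, ∃! j : Fin n, ∃ s : S, ∀ x : ↥(⊤ : Subgroup S),
      (((α i) (φ x) : ↥(⊤ : Subgroup S)) : S)
        = s * ((α j x : ↥(⊤ : Subgroup S)) : S) * s⁻¹ :=
    fun i => hrep ((α i).comp φ) (F.comp_mem hφ (hα i)) ((hαbij i).comp hφbij)
  set j : Fin n → Fin n := fun i => (key i).choose with hj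
  have keyprop : ∀ i : Fin n, ∃ s : S, ∀ x : ↥(⊤ : Subgroup S),
      (((α i) (φ x) : ↥(⊤ : Subgroup S)) : S)
        = s * ((α (j i) x : ↥(⊤ : Subgroup S)) : S) * s⁻¹ :=
    fun i => (key i).choose_spec.1
  set c : Fin n → S := fun i => (keyprop i).choose with hc
  have prop : ∀ (i : Fin n) (x : ↥(⊤ : Subgroup S)),
      (((α i) (φ x) : ↥(⊤ : Subgroup S)) : S)
        = c i * ((α (j i) x : ↥(⊤ : Subgroup S)) : S) * (c i)⁻¹ :=
    fun i => (keyprop i).choose_spec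
  -- `j` is injective
  have hinj : Function.Injective j := by
    intro i1 i2 h
    have hu := hrep (α i1) (hα i1) (hαbij i1)
    have e1 : ∃ s : S, ∀ x : ↥(⊤ : Subgroup S),
        ((α i1 x : ↥(⊤ : Subgroup S)) : S)
          = s * ((α i1 x : ↥(⊤ : Subgroup S)) : S) * s⁻¹ :=
      ⟨1, fun x => by group⟩
    have e2 : ∃ s : S, ∀ x : ↥(⊤ : Subgroup S),
        ((α i1 x : ↥(⊤ : Subgroup S)) : S)
          = s * ((α i2 x : ↥(⊤ : Subgroup S)) : S) * s⁻¹ := by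
      refine ⟨c i1 * (c i2)⁻¹, fun x => ?_⟩
      obtain ⟨u, hu'⟩ := hφbij.2 x
      have A := prop i1 u
      have B := prop i2 u
      rw [h] at A
      have hB : ((α (j i2) u : ↥(⊤ : Subgroup S)) : S)
          = (c i2)⁻¹ * ((α i2 (φ u) : ↥(⊤ : Subgroup S)) : S) * c i2 := by
        rw [B]; group
      rw [← hu', A, hB]; group
    exact hu.unique e1 e2
  have hbij : Function.Bijective j := Finite.injective_iff_bijective.mp hinj
  set σ : Fin n ≃ Fin n := Equiv.ofBijective j hbij with hσ
  set γ : Fin n → (↥(⊤ : Subgroup S) →* S) :=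
    fun i => (Subgroup.subtype ⊤).comp (α i) with hγ
  set Fc : ∀ i : Fin n, (amalgBiset ⊤ (γ i)).X ≃ (amalgBiset ⊤ (γ (σ i))).X :=
    fun i => (amalgToS (γ i)).trans
      ((Equiv.mulLeft (c i)⁻¹).trans (amalgToS (γ (σ i))).symm) with hFc
  refine ⟨Equiv.sigmaCongr σ Fc, ?_, ?_⟩
  · rintro s ⟨i, z⟩
    show (⟨σ i, Fc i ((amalgBiset ⊤ (γ i)).l
        ((φ ⟨s, Subgroup.mem_top s⟩ : ↥(⊤ : Subgroup S)) : S) z)⟩ :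
        Σ i, (amalgBiset ⊤ (γ i)).X)
      = ⟨σ i, (amalgBiset ⊤ (γ (σ i))).l s (Fc i z)⟩
    congr 1
    show (amalgToS (γ (σ i))).symm
        ((c i)⁻¹ * amalgToS (γ i) ((amalgBiset ⊤ (γ i)).l
          ((φ ⟨s, Subgroup.mem_top s⟩ : ↥(⊤ : Subgroup S)) : S) z))
      = (amalgBiset ⊤ (γ (σ i))).l s ((amalgToS (γ (σ i))).symm
          ((c i)⁻¹ * amalgToS (γ i) z))
    rw [Equiv.symm_apply_eq, amalgToS_l, amalgToS_l, Equiv.apply_symm_apply]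
    have hcoe : (⟨((φ ⟨s, Subgroup.mem_top s⟩ : ↥(⊤ : Subgroup S)) : S),
        Subgroup.mem_top _⟩ : ↥(⊤ : Subgroup S)) = φ ⟨s, Subgroup.mem_top s⟩ := rfl
    have h1 : γ i ⟨((φ ⟨s, Subgroup.mem_top s⟩ : ↥(⊤ : Subgroup S)) : S),
        Subgroup.mem_top _⟩
        = c i * ((α (σ i) ⟨s, Subgroup.mem_top s⟩ : ↥(⊤ : Subgroup S)) : S) * (c i)⁻¹ := by
      rw [hcoe]
      exact prop i ⟨s, Subgroup.mem_top s⟩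
    have h2 : γ (σ i) ⟨s, Subgroup.mem_top s⟩
        = ((α (σ i) ⟨s, Subgroup.mem_top s⟩ : ↥(⊤ : Subgroup S)) : S) := rfl
    rw [h1, h2]
    group
  · rintro ⟨i, z⟩ t
    show (⟨σ i, Fc i ((amalgBiset ⊤ (γ i)).r z t)⟩ : Σ i, (amalgBiset ⊤ (γ i)).X)
      = ⟨σ i, (amalgBiset ⊤ (γ (σ i))).r (Fc i z) t⟩
    congr 1
    show (amalgToS (γ (σ i))).symm
        ((c i)⁻¹ * amalgToS (γ i) ((amalgBiset ⊤ (γ i)).r z t))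
      = (amalgBiset ⊤ (γ (σ i))).r ((amalgToS (γ (σ i))).symm
          ((c i)⁻¹ * amalgToS (γ i) z)) t
    rw [Equiv.symm_apply_eq, amalgToS_r, amalgToS_r, Equiv.apply_symm_apply, mul_assoc]
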